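/- Let 0 ≤ ε ≤ 1/2, let t ≥ 0 and δ ≥ 0, and let f, g : {0,1}^n → {0,1}^k be functions whose output distributions (under a uniformly random input) are δ-close to min-entropy t. Then Pr_{(x,y)_ε}[f(x) = g(y)] ≤ 2^{-tε/(1-ε)} + 2δ. -/

import Mathlib

open Classical

/-- The weight of a pair `(x, y)` under the distribution `(x,y)_ε`: the `n`
coordinate pairs are independent, each pair equal with probability `(1-ε)/2 + (1-ε)/2`
split as `00`, `11` w.p. `(1-ε)/2` each and `01`, `10` w.p. `ε/2` each. -/
noncomputable def pairWeight (ε : ℝ) {n : ℕ} (x y : Fin n → Bool) : ℝ :=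
  ∏ i, if x i = y i then (1 - ε) / 2 else ε / 2

/-- `Pr_{(x,y)_ε}[P x y]`. -/
noncomputable def prPair (ε : ℝ) {n : ℕ}
    (P : (Fin n → Bool) → (Fin n → Bool) → Prop) : ℝ :=
  ∑ x : Fin n → Bool, ∑ y : Fin n → Bool, if P x y then pairWeight ε x y else 0

/-- The output distribution of `f` on a uniformly random input. -/
noncomputable def outDist {n k : ℕ} (f : (Fin n → Bool) → (Fin k → Bool))
    (z : Fin k → Bool) : ℝ :=
  (∑ x : Fin n → Bool, if f x = z then (1 : ℝ) else 0) / 2 ^ n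

/-- `D` is `δ`-close (in statistical distance `Σ |D - D'|`) to a distribution `D'`
of min-entropy `t` (i.e. every element has probability at most `2^{-t}`). -/
def CloseToMinEntropy {k : ℕ} (D : (Fin k → Bool) → ℝ) (δ t : ℝ) : Prop :=
  ∃ D' : (Fin k → Bool) → ℝ, (∀ z, 0 ≤ D' z) ∧ (∑ z, D' z = 1) ∧
    (∀ z, D' z ≤ (2 : ℝ) ^ (-t)) ∧ (∑ z, |D z - D' z|) ≤ δ

-- A: (1+s)^q - (1-s)^q ≥ 2 q s  on [0,1], for 0 ≤ q ≤ 1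
lemma auxA {q s : ℝ} (hq0 : 0 ≤ q) (hq1 : q ≤ 1) (hs0 : 0 ≤ s) (hs1 : s ≤ 1) :
    2 * q * s ≤ (1 + s) ^ q - (1 - s) ^ q := by
  set g : ℝ → ℝ := fun u => (1 + u) ^ q - (1 - u) ^ q - 2 * q * u with hg
  have hmono : MonotoneOn g (Set.Icc 0 1) := by
    apply monotoneOn_of_deriv_nonneg (convex_Icc 0 1)
    · apply ContinuousOn.sub
      apply ContinuousOn.sub
      · exact (continuousOn_const.add continuousOn_id).rpow_const
          (fun x hx => Or.inr hq0)
      · exact (continuousOn_const.sub continuousOn_id).rpow_const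
          (fun x hx => Or.inr hq0)
      · exact continuousOn_const.mul continuousOn_id
    · intro x hx
      rw [interior_Icc] at hx
      obtain ⟨hx0, hx1⟩ := hx
      have h1 : (0:ℝ) < 1 + x := by linarith
      have h2 : (0:ℝ) < 1 - x := by linarith
      have d1 : HasDerivAt (fun u : ℝ => (1 + u) ^ q) (q * (1 + x) ^ (q - 1)) x := by
        have := (Real.hasDerivAt_rpow_const (x := 1 + x) (p := q) (Or.inl h1.ne')).comp x
          ((hasDerivAt_id x).const_add 1)
        simpa [Function.comp_def] using this
      have d2 : HasDerivAt (fun u : ℝ => (1 - u) ^ q) (-(q * (1 - x) ^ (q - 1))) x := by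
        have := (Real.hasDerivAt_rpow_const (x := 1 - x) (p := q) (Or.inl h2.ne')).comp x
          ((hasDerivAt_id x).const_sub 1)
        simpa [Function.comp_def] using this
      have d3 : HasDerivAt g (q * (1 + x) ^ (q - 1) + q * (1 - x) ^ (q - 1) - 2 * q) x := by
        have := ((d1.sub d2).sub ((hasDerivAt_id x).const_mul (2 * q)))
        simpa [hg, sub_neg_eq_add, mul_comm, Pi.sub_def] using this
      exact d3.differentiableAt.differentiableWithinAt
    · intro x hx
      rw [interior_Icc] at hx
      obtain ⟨hx0, hx1⟩ := hx
      have h1 : (0:ℝ) < 1 + x := by linarith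
      have h2 : (0:ℝ) < 1 - x := by linarith
      have d1 : HasDerivAt (fun u : ℝ => (1 + u) ^ q) (q * (1 + x) ^ (q - 1)) x := by
        have := (Real.hasDerivAt_rpow_const (x := 1 + x) (p := q) (Or.inl h1.ne')).comp x
          ((hasDerivAt_id x).const_add 1)
        simpa [Function.comp_def] using this
      have d2 : HasDerivAt (fun u : ℝ => (1 - u) ^ q) (-(q * (1 - x) ^ (q - 1))) x := by
        have := (Real.hasDerivAt_rpow_const (x := 1 - x) (p := q) (Or.inl h2.ne')).comp x
          ((hasDerivAt_id x).const_sub 1)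
        simpa [Function.comp_def] using this
      have d3 : HasDerivAt g (q * (1 + x) ^ (q - 1) + q * (1 - x) ^ (q - 1) - 2 * q) x := by
        have := ((d1.sub d2).sub ((hasDerivAt_id x).const_mul (2 * q)))
        simpa [hg, sub_neg_eq_add, mul_comm, Pi.sub_def] using this
      rw [d3.deriv]
      -- AM-GM : X + Y ≥ 2, where X*Y = (1-x^2)^(q-1) ≥ 1
      set X := (1 + x) ^ (q - 1)
      set Y := (1 - x) ^ (q - 1)
      have hX : 0 < X := Real.rpow_pos_of_pos h1 _
      have hY : 0 < Y := Real.rpow_pos_of_pos h2 _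
      have hXY : 1 ≤ X * Y := by
        have : X * Y = ((1 + x) * (1 - x)) ^ (q - 1) :=
          (Real.mul_rpow h1.le h2.le).symm
        rw [this]
        exact Real.one_le_rpow_of_pos_of_le_one_of_nonpos (by nlinarith) (by nlinarith) (by linarith)
      nlinarith [sq_nonneg (X - Y), sq_nonneg (X + Y - 2), hq0]
  have := hmono (Set.mem_Icc.2 ⟨le_refl 0, zero_le_one⟩) (Set.mem_Icc.2 ⟨hs0, hs1⟩) hs0
  simp [hg] at this
  linarith [this]

-- B : (1+s)^p + (1-s)^p ≥ 2 + p(p-1)s^2 on [0,1], 1 ≤ p ≤ 2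
lemma auxB {p s : ℝ} (hp1 : 1 ≤ p) (hp2 : p ≤ 2) (hs0 : 0 ≤ s) (hs1 : s ≤ 1) :
    2 + p * (p - 1) * s ^ 2 ≤ (1 + s) ^ p + (1 - s) ^ p := by
  set h : ℝ → ℝ := fun u => (1 + u) ^ p + (1 - u) ^ p - 2 - p * (p - 1) * u ^ 2 with hh
  have hp0 : (0:ℝ) ≤ p := by linarith
  have hmono : MonotoneOn h (Set.Icc 0 1) := by
    apply monotoneOn_of_deriv_nonneg (convex_Icc 0 1)
    · apply ContinuousOn.sub
      apply ContinuousOn.sub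
      · exact ((continuousOn_const.add continuousOn_id).rpow_const
          (fun x hx => Or.inr hp0)).add ((continuousOn_const.sub continuousOn_id).rpow_const
          (fun x hx => Or.inr hp0))
      · exact continuousOn_const
      · exact continuousOn_const.mul (continuousOn_id.pow 2)
    · intro x hx
      rw [interior_Icc] at hx
      obtain ⟨hx0, hx1⟩ := hx
      have h1 : (0:ℝ) < 1 + x := by linarith
      have h2 : (0:ℝ) < 1 - x := by linarith
      have d1 : HasDerivAt (fun u : ℝ => (1 + u) ^ p) (p * (1 + x) ^ (p - 1)) x := by
        have := (Real.hasDerivAt_rpow_const (x := 1 + x) (p := p) (Or.inl h1.ne')).comp x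
          ((hasDerivAt_id x).const_add 1)
        simpa [Function.comp_def] using this
      have d2 : HasDerivAt (fun u : ℝ => (1 - u) ^ p) (-(p * (1 - x) ^ (p - 1))) x := by
        have := (Real.hasDerivAt_rpow_const (x := 1 - x) (p := p) (Or.inl h2.ne')).comp x
          ((hasDerivAt_id x).const_sub 1)
        simpa [Function.comp_def] using this
      have d4 : HasDerivAt (fun u : ℝ => p * (p - 1) * u ^ 2 + 2) (p * (p - 1) * (2 * x)) x := by
        have := (((hasDerivAt_pow 2 x)).const_mul (p * (p - 1))).add_const 2
        simpa [mul_comm, mul_assoc] using this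
      have d3 : HasDerivAt h
          (p * (1 + x) ^ (p - 1) + (-(p * (1 - x) ^ (p - 1))) - p * (p - 1) * (2 * x)) x := by
        have := (d1.add d2).sub d4
        have e : h = fun u => (1 + u) ^ p + (1 - u) ^ p - (p * (p - 1) * u ^ 2 + 2) := by
          funext u; simp [hh]; ring
        rw [e]; exact this
      exact d3.differentiableAt.differentiableWithinAt
    · intro x hx
      rw [interior_Icc] at hx
      obtain ⟨hx0, hx1⟩ := hx
      have h1 : (0:ℝ) < 1 + x := by linarith
      have h2 : (0:ℝ) < 1 - x := by linarith
      have d1 : HasDerivAt (fun u : ℝ => (1 + u) ^ p) (p * (1 + x) ^ (p - 1)) x := by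
        have := (Real.hasDerivAt_rpow_const (x := 1 + x) (p := p) (Or.inl h1.ne')).comp x
          ((hasDerivAt_id x).const_add 1)
        simpa [Function.comp_def] using this
      have d2 : HasDerivAt (fun u : ℝ => (1 - u) ^ p) (-(p * (1 - x) ^ (p - 1))) x := by
        have := (Real.hasDerivAt_rpow_const (x := 1 - x) (p := p) (Or.inl h2.ne')).comp x
          ((hasDerivAt_id x).const_sub 1)
        simpa [Function.comp_def] using this
      have d4 : HasDerivAt (fun u : ℝ => p * (p - 1) * u ^ 2 + 2) (p * (p - 1) * (2 * x)) x := by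
        have := (((hasDerivAt_pow 2 x)).const_mul (p * (p - 1))).add_const 2
        simpa [mul_comm, mul_assoc] using this
      have d3 : HasDerivAt h
          (p * (1 + x) ^ (p - 1) + (-(p * (1 - x) ^ (p - 1))) - p * (p - 1) * (2 * x)) x := by
        have := (d1.add d2).sub d4
        have e : h = fun u => (1 + u) ^ p + (1 - u) ^ p - (p * (p - 1) * u ^ 2 + 2) := by
          funext u; simp [hh]; ring
        rw [e]; exact this
      rw [d3.deriv]
      have := auxA (q := p - 1) (s := x) (by linarith) (by linarith) hx0.le hx1.le
      nlinarith [this, hp0]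
  have := hmono (Set.mem_Icc.2 ⟨le_refl 0, zero_le_one⟩) (Set.mem_Icc.2 ⟨hs0, hs1⟩) hs0
  simp [hh] at this
  linarith [this]

lemma auxC {ρ s : ℝ} (hρ0 : 0 ≤ ρ) (hρ1 : ρ ≤ 1) (hs0 : 0 ≤ s) (hs1 : s ≤ 1) :
    (1 + ρ * s ^ 2) ^ ((1 + ρ) / 2) ≤ ((1 + s) ^ (1 + ρ) + (1 - s) ^ (1 + ρ)) / 2 := by
  have hb : (1 + ρ * s ^ 2) ^ ((1 + ρ) / 2) ≤ 1 + ((1 + ρ) / 2) * (ρ * s ^ 2) := by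
    have hw1 : (0:ℝ) ≤ (1 + ρ) / 2 := by linarith
    have hw2 : (0:ℝ) ≤ 1 - (1 + ρ) / 2 := by linarith
    have h1 := Real.geom_mean_le_arith_mean2_weighted hw1 hw2
      (by positivity : (0:ℝ) ≤ 1 + ρ * s ^ 2) zero_le_one (by ring)
    rw [Real.one_rpow, mul_one] at h1
    calc (1 + ρ * s ^ 2) ^ ((1 + ρ) / 2)
        ≤ (1 + ρ) / 2 * (1 + ρ * s ^ 2) + (1 - (1 + ρ) / 2) * 1 := h1
      _ = 1 + ((1 + ρ) / 2) * (ρ * s ^ 2) := by ring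
  refine hb.trans ?_
  have := auxB (p := 1 + ρ) (s := s) (by linarith) (by linarith) hs0 hs1
  nlinarith [this]

lemma auxDmain {ρ a b : ℝ} (hρ0 : 0 ≤ ρ) (hρ1 : ρ ≤ 1) (ha : 0 ≤ a) (hb : 0 ≤ b)
    (hba : b ≤ a) :
    ((a + b) / 2) ^ 2 + ρ * ((a - b) / 2) ^ 2
      ≤ ((a ^ (1 + ρ) + b ^ (1 + ρ)) / 2) ^ (2 / (1 + ρ)) := by
  have hp1 : (1:ℝ) ≤ 1 + ρ := by linarith
  have hppos : (0:ℝ) < 1 + ρ := by linarith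
  by_cases hc0 : a + b = 0
  · have ha0 : a = 0 := by linarith
    have hb0 : b = 0 := by linarith
    subst ha0; subst hb0
    simp [Real.zero_rpow hppos.ne', Real.zero_rpow (by positivity : (2 / (1+ρ)) ≠ 0)]
  · have hab2 : (0:ℝ) < a + b := lt_of_le_of_ne (by positivity) (Ne.symm hc0)
    set c := (a + b) / 2 with hcdef
    have hc : (0:ℝ) < c := by positivity
    set s := (a - b) / (a + b) with hsdef
    have hs0 : 0 ≤ s := div_nonneg (by linarith) (by linarith)
    have hs1 : s ≤ 1 := by rw [hsdef, div_le_one (by linarith)]; linarith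
    have e1 : c * (1 + s) = a := by rw [hcdef, hsdef]; field_simp; ring
    have e2 : c * (1 - s) = b := by rw [hcdef, hsdef]; field_simp; ring
    have key : c ^ (1+ρ) * (((1 + s) ^ (1+ρ) + (1 - s) ^ (1+ρ)) / 2)
        = (a ^ (1+ρ) + b ^ (1+ρ)) / 2 := by
      rw [← e1, ← e2, Real.mul_rpow hc.le (by linarith), Real.mul_rpow hc.le (by linarith)]
      ring
    have hLK := auxC hρ0 hρ1 hs0 hs1
    have step : c ^ (1+ρ) * (1 + ρ * s ^ 2) ^ ((1+ρ)/2) ≤ (a ^ (1+ρ) + b ^ (1+ρ)) / 2 := by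
      rw [← key]
      exact mul_le_mul_of_nonneg_left hLK (by positivity)
    have hmono := Real.rpow_le_rpow (by positivity) step (by positivity : (0:ℝ) ≤ 2 / (1+ρ))
    have lhs_eq : (c ^ (1+ρ) * (1 + ρ * s ^ 2) ^ ((1+ρ)/2)) ^ (2/(1+ρ))
        = c ^ 2 * (1 + ρ * s ^ 2) := by
      rw [Real.mul_rpow (by positivity) (by positivity),
        ← Real.rpow_mul hc.le, ← Real.rpow_mul (by positivity)]
      have e3 : (1+ρ) * (2/(1+ρ)) = 2 := by field_simp
      have e4 : (1+ρ)/2 * (2/(1+ρ)) = 1 := by field_simp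
      rw [e3, e4, Real.rpow_one, Real.rpow_two]
    rw [lhs_eq] at hmono
    refine le_trans (le_of_eq ?_) hmono
    have e5 : (a - b) / 2 = c * s := by
      rw [hcdef, hsdef]; field_simp
    rw [e5]; ring
lemma auxD {ρ a b : ℝ} (hρ0 : 0 ≤ ρ) (hρ1 : ρ ≤ 1) (ha : 0 ≤ a) (hb : 0 ≤ b) :
    ((a + b) / 2) ^ 2 + ρ * ((a - b) / 2) ^ 2
      ≤ ((a ^ (1 + ρ) + b ^ (1 + ρ)) / 2) ^ (2 / (1 + ρ)) := by
  rcases le_total b a with hba | hab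
  · exact auxDmain hρ0 hρ1 ha hb hba
  · have := auxDmain hρ0 hρ1 hb ha hab
    calc ((a + b) / 2) ^ 2 + ρ * ((a - b) / 2) ^ 2
        = ((b + a) / 2) ^ 2 + ρ * ((b - a) / 2) ^ 2 := by ring
      _ ≤ ((b ^ (1 + ρ) + a ^ (1 + ρ)) / 2) ^ (2 / (1 + ρ)) := this
      _ = ((a ^ (1 + ρ) + b ^ (1 + ρ)) / 2) ^ (2 / (1 + ρ)) := by rw [add_comm]

-- bilinear two-point inequality, p = 2 - 2ε
lemma auxE {ε a0 a1 b0 b1 : ℝ} (hε0 : 0 ≤ ε) (hε1 : ε ≤ 1/2)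
    (ha0 : 0 ≤ a0) (ha1 : 0 ≤ a1) (hb0 : 0 ≤ b0) (hb1 : 0 ≤ b1) :
    (1 - ε)/2 * (a0*b0 + a1*b1) + ε/2 * (a0*b1 + a1*b0)
      ≤ ((a0 ^ (2 - 2*ε) + a1 ^ (2 - 2*ε)) / 2) ^ (1/(2 - 2*ε))
        * ((b0 ^ (2 - 2*ε) + b1 ^ (2 - 2*ε)) / 2) ^ (1/(2 - 2*ε)) := by
  set ρ := 1 - 2*ε with hρdef
  have hρ0 : 0 ≤ ρ := by simp [hρdef]; linarith
  have hρ1 : ρ ≤ 1 := by simp [hρdef]; linarith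
  have hpe : 1 + ρ = 2 - 2*ε := by rw [hρdef]; ring
  set ca := (a0 + a1)/2; set da := (a0 - a1)/2
  set cb := (b0 + b1)/2; set db := (b0 - b1)/2
  have hX : (0:ℝ) ≤ ca^2 + ρ*da^2 := by positivity
  have hY : (0:ℝ) ≤ cb^2 + ρ*db^2 := by positivity
  have lhs_eq : (1 - ε)/2 * (a0*b0 + a1*b1) + ε/2 * (a0*b1 + a1*b0)
      = ca*cb + ρ*(da*db) := by simp only [hρdef, ca, da, cb, db]; ring
  have cs : (ca*cb + ρ*(da*db))^2 ≤ (ca^2 + ρ*da^2) * (cb^2 + ρ*db^2) := by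
    nlinarith [sq_nonneg (ca*db - cb*da), hρ0, hρ1, sq_nonneg (da*db), mul_nonneg hρ0 (sq_nonneg (ca*db - cb*da))]
  have habs : ca*cb + ρ*(da*db) ≤ Real.sqrt (ca^2 + ρ*da^2) * Real.sqrt (cb^2 + ρ*db^2) := by
    rw [← Real.sqrt_mul hX]
    calc ca*cb + ρ*(da*db) ≤ |ca*cb + ρ*(da*db)| := le_abs_self _
      _ = Real.sqrt ((ca*cb + ρ*(da*db))^2) := (Real.sqrt_sq_eq_abs _).symm
      _ ≤ Real.sqrt ((ca^2 + ρ*da^2) * (cb^2 + ρ*db^2)) := Real.sqrt_le_sqrt cs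
  have bndA : Real.sqrt (ca^2 + ρ*da^2)
      ≤ ((a0 ^ (1+ρ) + a1 ^ (1+ρ)) / 2) ^ (1/(1+ρ)) := by
    have h := auxD hρ0 hρ1 ha0 ha1
    have := Real.sqrt_le_sqrt h
    refine this.trans (le_of_eq ?_)
    rw [Real.sqrt_eq_rpow, ← Real.rpow_mul (by positivity)]
    congr 1
    field_simp
  have bndB : Real.sqrt (cb^2 + ρ*db^2)
      ≤ ((b0 ^ (1+ρ) + b1 ^ (1+ρ)) / 2) ^ (1/(1+ρ)) := by
    have h := auxD hρ0 hρ1 hb0 hb1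
    have := Real.sqrt_le_sqrt h
    refine this.trans (le_of_eq ?_)
    rw [Real.sqrt_eq_rpow, ← Real.rpow_mul (by positivity)]
    congr 1
    field_simp
  rw [lhs_eq, ← hpe]
  calc ca*cb + ρ*(da*db)
      ≤ Real.sqrt (ca^2 + ρ*da^2) * Real.sqrt (cb^2 + ρ*db^2) := habs
    _ ≤ ((a0 ^ (1+ρ) + a1 ^ (1+ρ)) / 2) ^ (1/(1+ρ))
        * ((b0 ^ (1+ρ) + b1 ^ (1+ρ)) / 2) ^ (1/(1+ρ)) := by
        exact mul_le_mul bndA bndB (Real.sqrt_nonneg _) (by positivity)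

lemma sum_pi_succ {n : ℕ} (F : (Fin (n+1) → Bool) → ℝ) :
    ∑ z : Fin (n+1) → Bool, F z = ∑ x0 : Bool, ∑ x : Fin n → Bool, F (Fin.cons x0 x) := by
  rw [← (Fin.consEquiv (fun _ => Bool)).sum_comp F, Fintype.sum_prod_type]
  rfl

lemma pairWeight_cons {ε : ℝ} {n : ℕ} (x0 y0 : Bool) (x y : Fin n → Bool) :
    pairWeight ε (Fin.cons x0 x) (Fin.cons y0 y)
      = (if x0 = y0 then (1 - ε) / 2 else ε / 2) * pairWeight ε x y := by
  simp [pairWeight, Fin.prod_univ_succ]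

lemma pairWeight_nonneg {ε : ℝ} (hε0 : 0 ≤ ε) (hε1 : ε ≤ 1) {n : ℕ} (x y : Fin n → Bool) :
    0 ≤ pairWeight ε x y :=
  Finset.prod_nonneg fun i _ => by by_cases h : x i = y i <;> simp [h] <;> linarith

lemma pairWeight_comm {ε : ℝ} {n : ℕ} (x y : Fin n → Bool) :
    pairWeight ε x y = pairWeight ε y x := by
  unfold pairWeight
  exact Finset.prod_congr rfl fun i _ => by simp [eq_comm]

lemma pairWeight_marginal {ε : ℝ} {n : ℕ} (x : Fin n → Bool) :
    ∑ y : Fin n → Bool, pairWeight ε x y = (1/2)^n := by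
  induction n with
  | zero =>
    rw [show ((Finset.univ : Finset (Fin 0 → Bool))) = {Fin.elim0} from by
      apply Finset.eq_singleton_iff_unique_mem.2
      exact ⟨Finset.mem_univ _, fun x _ => funext fun i => absurd i.2 (Nat.not_lt_zero _)⟩]
    simp [pairWeight]
  | succ n ih =>
    have hx : x = Fin.cons (x 0) (fun i => x i.succ) := by
      funext i
      refine Fin.cases ?_ ?_ i <;> simp
    rw [sum_pi_succ (fun y => pairWeight ε x y)]
    calc ∑ y0 : Bool, ∑ y : Fin n → Bool, pairWeight ε x (Fin.cons y0 y)
        = ∑ y0 : Bool, (if x 0 = y0 then (1-ε)/2 else ε/2) *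
            ∑ y : Fin n → Bool, pairWeight ε (fun i => x i.succ) y := by
          refine Finset.sum_congr rfl fun y0 _ => ?_
          rw [Finset.mul_sum]
          refine Finset.sum_congr rfl fun y _ => ?_
          conv_lhs => rw [hx]
          rw [pairWeight_cons]
      _ = ∑ y0 : Bool, (if x 0 = y0 then (1-ε)/2 else ε/2) * (1/2)^n := by
          simp_rw [ih (fun i => x i.succ)]
      _ = (1/2)^(n+1) := by
          rw [Fintype.sum_bool]
          rcases Bool.dichotomy (x 0) with h | h <;> simp [h] <;> ring

-- Phi and its properties
noncomputable def Phi (c p q : ℝ) : ℝ := min p (min q (p ^ c * q ^ c))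

lemma Phi_comm (c p q : ℝ) : Phi c p q = Phi c q p := by
  unfold Phi
  rw [mul_comm, min_left_comm]

lemma Phi_mono {c p p' q : ℝ} (hc : 0 ≤ c) (hp : 0 ≤ p) (hq : 0 ≤ q) (h : p ≤ p') :
    Phi c p q ≤ Phi c p' q := by
  unfold Phi
  exact min_le_min h (min_le_min le_rfl
    (mul_le_mul_of_nonneg_right (Real.rpow_le_rpow hp h hc) (Real.rpow_nonneg hq c)))

lemma Phi_lip {c p p' q : ℝ} (hc0 : 0 ≤ c) (hc1 : c ≤ 1) (hp' : 0 ≤ p') (hq : 0 ≤ q)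
    (h : p' ≤ p) : Phi c p q ≤ Phi c p' q + (p - p') := by
  have hp : 0 ≤ p := hp'.trans h
  have hd : 0 ≤ p - p' := by linarith
  have key : min p (p ^ c * q ^ c) ≤ p' ^ c * q ^ c + (p - p') := by
    by_cases hp0 : p = 0
    · have hp'0 : p' = 0 := le_antisymm (hp0 ▸ h) hp'
      subst hp0; subst hp'0
      simp only [sub_zero, sub_self]
      calc min 0 (0 ^ c * q ^ c) ≤ 0 := min_le_left _ _
        _ ≤ 0 ^ c * q ^ c + 0 := by positivity
    · have hppos : 0 < p := lt_of_le_of_ne hp (Ne.symm hp0)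
      have hpc : (0:ℝ) < p ^ c := Real.rpow_pos_of_pos hppos c
      by_cases h1 : p ≤ p ^ c * q ^ c
      · -- q^c ≥ p^{1-c} ≥ p'^{1-c}, so p' ≤ p'^c q^c
        have hq1 : p ^ (1 - c) ≤ q ^ c := by
          rw [Real.rpow_sub hppos, Real.rpow_one]
          rw [div_le_iff₀ hpc]
          calc p ≤ p ^ c * q ^ c := h1
            _ = q ^ c * p ^ c := by ring
        have hp'q : p' ≤ p' ^ c * q ^ c := by
          calc p' = p' ^ c * p' ^ (1 - c) := by
                rw [← Real.rpow_add' hp' (by norm_num), add_sub_cancel, Real.rpow_one]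
            _ ≤ p' ^ c * q ^ c := by
                refine mul_le_mul_of_nonneg_left ?_ (Real.rpow_nonneg hp' c)
                exact (Real.rpow_le_rpow hp' h (by linarith)).trans hq1
        calc min p (p ^ c * q ^ c) ≤ p := min_le_left _ _
          _ = p' + (p - p') := by ring
          _ ≤ p' ^ c * q ^ c + (p - p') := by linarith
      · push_neg at h1
        have hq1 : q ^ c ≤ p ^ (1 - c) := by
          rw [Real.rpow_sub hppos, Real.rpow_one, le_div_iff₀ hpc]
          calc q ^ c * p ^ c = p ^ c * q ^ c := by ring
            _ ≤ p := h1.le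
        have main : p ^ c * q ^ c ≤ p' ^ c * q ^ c + (p - p') := by
          have e1 : (p ^ c - p' ^ c) * q ^ c ≤ (p ^ c - p' ^ c) * p ^ (1 - c) :=
            mul_le_mul_of_nonneg_left hq1
              (by have := Real.rpow_le_rpow hp' h hc0; linarith)
          have e2 : p ^ c * p ^ (1 - c) = p := by
            rw [← Real.rpow_add hppos, add_sub_cancel, Real.rpow_one]
          have e3 : p' ^ c * p' ^ (1 - c) = p' := by
            rw [← Real.rpow_add' hp' (by norm_num), add_sub_cancel, Real.rpow_one]
          have e4 : p' ^ c * p' ^ (1 - c) ≤ p' ^ c * p ^ (1 - c) :=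
            mul_le_mul_of_nonneg_left (Real.rpow_le_rpow hp' h (by linarith))
              (Real.rpow_nonneg hp' c)
          nlinarith [e1, e2, e3, e4]
        exact (min_le_right _ _).trans main
  have goal_eq : Phi c p' q + (p - p') = min (p' + (p-p')) (min (q + (p-p')) (p' ^ c * q ^ c + (p-p'))) := by
    unfold Phi
    rw [min_add_add_right, min_add_add_right]
  rw [goal_eq]
  refine le_min ?_ (le_min ?_ ?_)
  · calc Phi c p q ≤ p := min_le_left _ _
      _ = p' + (p - p') := by ring
  · calc Phi c p q ≤ min q (p ^ c * q ^ c) := min_le_right _ _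
      _ ≤ q := min_le_left _ _
      _ ≤ q + (p - p') := by linarith
  · calc Phi c p q ≤ min p (p ^ c * q ^ c) := by unfold Phi; exact le_min (min_le_left _ _) ((min_le_right _ _).trans (min_le_right _ _))
      _ ≤ p' ^ c * q ^ c + (p - p') := key

lemma Phi_abs {c p p' q : ℝ} (hc0 : 0 ≤ c) (hc1 : c ≤ 1) (hp : 0 ≤ p) (hp' : 0 ≤ p')
    (hq : 0 ≤ q) : Phi c p q ≤ Phi c p' q + |p - p'| := by
  rcases le_total p' p with h | h
  · calc Phi c p q ≤ Phi c p' q + (p - p') := Phi_lip hc0 hc1 hp' hq h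
      _ ≤ Phi c p' q + |p - p'| := by
        have := le_abs_self (p - p'); linarith
  · calc Phi c p q ≤ Phi c p' q := Phi_mono hc0 hp hq h
      _ ≤ Phi c p' q + |p - p'| := by
        have := abs_nonneg (p - p'); linarith

lemma Phi_le_prod (c p q : ℝ) : Phi c p q ≤ p ^ c * q ^ c :=
  (min_le_right _ _).trans (min_le_right _ _)

lemma auxF (ε : ℝ) (hε0 : 0 ≤ ε) (hε1 : ε ≤ 1/2) :
    ∀ (n : ℕ) (a b : (Fin n → Bool) → ℝ), (∀ x, 0 ≤ a x) → (∀ x, 0 ≤ b x) →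
    (∑ x : Fin n → Bool, ∑ y : Fin n → Bool, pairWeight ε x y * (a x * b y)) ≤
      ((∑ x : Fin n → Bool, a x ^ (2-2*ε)) / 2^n) ^ (1/(2-2*ε))
        * ((∑ y : Fin n → Bool, b y ^ (2-2*ε)) / 2^n) ^ (1/(2-2*ε)) := by
  have hP1 : (1:ℝ) ≤ 2 - 2*ε := by linarith
  have hPpos : (0:ℝ) < 2 - 2*ε := by linarith
  intro n
  induction n with
  | zero =>
    intro a b ha hb
    simp only [pow_zero]
    rw [show ((Finset.univ : Finset (Fin 0 → Bool))) = {Fin.elim0} from by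
      apply Finset.eq_singleton_iff_unique_mem.2
      constructor
      · exact Finset.mem_univ _
      · intro x _; funext i; exact absurd i.2 (Nat.not_lt_zero _)]
    simp only [Finset.sum_singleton, div_one]
    have hw : pairWeight ε Fin.elim0 Fin.elim0 = 1 := by simp [pairWeight]
    rw [hw, one_mul, one_div, Real.rpow_rpow_inv (ha _) hPpos.ne',
      Real.rpow_rpow_inv (hb _) hPpos.ne']
  | succ n ih =>
    intro a b ha hb
    set P := 2 - 2*ε with hPdef
    set A : Bool → ℝ := fun x0 =>
      ((∑ x : Fin n → Bool, a (Fin.cons x0 x) ^ P) / 2^n) ^ (1/P) with hA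
    set B : Bool → ℝ := fun y0 =>
      ((∑ y : Fin n → Bool, b (Fin.cons y0 y) ^ P) / 2^n) ^ (1/P) with hB
    have hAnn : ∀ x0, 0 ≤ A x0 := fun x0 => Real.rpow_nonneg
      (div_nonneg (Finset.sum_nonneg fun x _ => Real.rpow_nonneg (ha _) _) (by positivity)) _
    have hBnn : ∀ y0, 0 ≤ B y0 := fun y0 => Real.rpow_nonneg
      (div_nonneg (Finset.sum_nonneg fun y _ => Real.rpow_nonneg (hb _) _) (by positivity)) _
    have step1 : (∑ x : Fin (n+1) → Bool, ∑ y : Fin (n+1) → Bool,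
        pairWeight ε x y * (a x * b y))
        = ∑ x0 : Bool, ∑ y0 : Bool, (if x0 = y0 then (1 - ε) / 2 else ε / 2) *
            (∑ x : Fin n → Bool, ∑ y : Fin n → Bool,
              pairWeight ε x y * (a (Fin.cons x0 x) * b (Fin.cons y0 y))) := by
      simp_rw [sum_pi_succ, pairWeight_cons, Finset.mul_sum]
      refine Finset.sum_congr rfl fun x0 _ => ?_
      rw [Finset.sum_comm]
      exact Finset.sum_congr rfl fun y0 _ => Finset.sum_congr rfl fun x _ =>
        Finset.sum_congr rfl fun y _ => by ring
    have step2 : (∑ x0 : Bool, ∑ y0 : Bool, (if x0 = y0 then (1 - ε) / 2 else ε / 2) *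
            (∑ x : Fin n → Bool, ∑ y : Fin n → Bool,
              pairWeight ε x y * (a (Fin.cons x0 x) * b (Fin.cons y0 y))))
        ≤ ∑ x0 : Bool, ∑ y0 : Bool, (if x0 = y0 then (1 - ε) / 2 else ε / 2) *
            (A x0 * B y0) := by
      refine Finset.sum_le_sum fun x0 _ => Finset.sum_le_sum fun y0 _ => ?_
      have hk : (0:ℝ) ≤ (if x0 = y0 then (1 - ε) / 2 else ε / 2) := by
        split <;> linarith
      exact mul_le_mul_of_nonneg_left
        (ih (fun x => a (Fin.cons x0 x)) (fun y => b (Fin.cons y0 y))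
          (fun x => ha _) (fun y => hb _)) hk
    have step3 : (∑ x0 : Bool, ∑ y0 : Bool, (if x0 = y0 then (1 - ε) / 2 else ε / 2) *
            (A x0 * B y0))
        ≤ ((A false ^ P + A true ^ P) / 2) ^ (1/P) * ((B false ^ P + B true ^ P) / 2) ^ (1/P) := by
      have := auxE (a0 := A false) (a1 := A true) (b0 := B false) (b1 := B true)
        hε0 hε1 (hAnn false) (hAnn true) (hBnn false) (hBnn true)
      rw [← hPdef] at this
      refine le_trans (le_of_eq ?_) this
      simp [Fintype.sum_bool]
      ring
    have eA : ∀ x0, A x0 ^ P = (∑ x : Fin n → Bool, a (Fin.cons x0 x) ^ P) / 2^n := by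
      intro x0
      rw [hA, one_div, Real.rpow_inv_rpow
        (div_nonneg (Finset.sum_nonneg fun x _ => Real.rpow_nonneg (ha _) _) (by positivity))
        hPpos.ne']
    have eB : ∀ y0, B y0 ^ P = (∑ y : Fin n → Bool, b (Fin.cons y0 y) ^ P) / 2^n := by
      intro y0
      rw [hB, one_div, Real.rpow_inv_rpow
        (div_nonneg (Finset.sum_nonneg fun y _ => Real.rpow_nonneg (hb _) _) (by positivity))
        hPpos.ne']
    have eSum : ((A false ^ P + A true ^ P) / 2)
        = (∑ x : Fin (n+1) → Bool, a x ^ P) / 2^(n+1) := by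
      rw [eA, eA, sum_pi_succ (fun x => a x ^ P), Fintype.sum_bool]
      push_cast
      field_simp
      ring
    have eSumB : ((B false ^ P + B true ^ P) / 2)
        = (∑ y : Fin (n+1) → Bool, b y ^ P) / 2^(n+1) := by
      rw [eB, eB, sum_pi_succ (fun y => b y ^ P), Fintype.sum_bool]
      push_cast
      field_simp
      ring
    calc (∑ x : Fin (n+1) → Bool, ∑ y : Fin (n+1) → Bool, pairWeight ε x y * (a x * b y))
        = _ := step1
      _ ≤ _ := step2
      _ ≤ ((A false ^ P + A true ^ P) / 2) ^ (1/P) * ((B false ^ P + B true ^ P) / 2) ^ (1/P) := step3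
      _ = ((∑ x : Fin (n+1) → Bool, a x ^ P) / 2^(n+1)) ^ (1/P)
          * ((∑ y : Fin (n+1) → Bool, b y ^ P) / 2^(n+1)) ^ (1/P) := by rw [eSum, eSumB]

theorem stmt0 {n k : ℕ} (ε t δ : ℝ) (hε0 : 0 ≤ ε) (hε1 : ε ≤ 1 / 2)
    (ht : 0 ≤ t) (hδ : 0 ≤ δ)
    (f g : (Fin n → Bool) → (Fin k → Bool))
    (hf : CloseToMinEntropy (outDist f) δ t)
    (hg : CloseToMinEntropy (outDist g) δ t) :
    prPair ε (fun x y => f x = g y) ≤ (2 : ℝ) ^ (-(t * ε) / (1 - ε)) + 2 * δ := by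
  obtain ⟨Df, hDf0, hDfsum, hDfle, hDfδ⟩ := hf
  obtain ⟨Dg, hDg0, hDgsum, hDgle, hDgδ⟩ := hg
  have hε1' : ε ≤ 1 := by linarith
  have hPpos : (0:ℝ) < 2 - 2*ε := by linarith
  set c : ℝ := 1/(2 - 2*ε) with hc
  have hc0 : 0 ≤ c := by positivity
  have hc1 : c ≤ 1 := by rw [hc, div_le_one hPpos]; linarith
  have h2c1 : 0 ≤ 2*c - 1 := by
    rw [hc, le_sub_iff_add_le, zero_add, mul_one_div, le_div_iff₀ hPpos]; linarith
  -- T z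
  set T : (Fin k → Bool) → ℝ := fun z => ∑ x : Fin n → Bool, ∑ y : Fin n → Bool,
    pairWeight ε x y * ((if f x = z then (1:ℝ) else 0) * (if g y = z then (1:ℝ) else 0)) with hT
  have prPair_eq : prPair ε (fun x y => f x = g y) = ∑ z : Fin k → Bool, T z := by
    rw [hT, prPair]
    have swap : ∑ z : Fin k → Bool, ∑ x : Fin n → Bool, ∑ y : Fin n → Bool,
        pairWeight ε x y * ((if f x = z then (1:ℝ) else 0) * (if g y = z then (1:ℝ) else 0))
        = ∑ x : Fin n → Bool, ∑ y : Fin n → Bool, ∑ z : Fin k → Bool,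
        pairWeight ε x y * ((if f x = z then (1:ℝ) else 0) * (if g y = z then (1:ℝ) else 0)) := by
      rw [Finset.sum_comm]
      exact Finset.sum_congr rfl fun x _ => Finset.sum_comm
    rw [swap]
    refine Finset.sum_congr rfl fun x _ => Finset.sum_congr rfl fun y _ => ?_
    rw [← Finset.mul_sum]
    have e : ∑ z : Fin k → Bool, ((if f x = z then (1:ℝ) else 0) * (if g y = z then (1:ℝ) else 0))
        = if f x = g y then (1:ℝ) else 0 := by
      by_cases hfg : f x = g y
      · rw [hfg]
        rw [Finset.sum_congr rfl (fun z _ => show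
            (if g y = z then (1:ℝ) else 0) * (if g y = z then (1:ℝ) else 0)
              = if g y = z then (1:ℝ) else 0 from by split <;> ring)]
        simp [hfg, Finset.sum_ite_eq]
      · rw [Finset.sum_congr rfl (fun z _ => show
            (if f x = z then (1:ℝ) else 0) * (if g y = z then (1:ℝ) else 0) = 0 from by
          split <;> split <;> simp_all)]
        simp [hfg]
    rw [e]
    split <;> ring
  -- nonnegativity of outDist
  have hout : ∀ (m : ℕ) (h : (Fin n → Bool) → (Fin m → Bool)) (z : Fin m → Bool),
      0 ≤ outDist h z := fun m h z =>
    div_nonneg (Finset.sum_nonneg fun x _ => by split <;> norm_num) (by positivity)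
  -- generic single-marginal bound
  have Tbound : ∀ (F G : (Fin n → Bool) → ℝ), (∀ y, 0 ≤ G y) → (∀ y, G y ≤ 1) →
      ∀ K : (Fin n → Bool) → ℝ, (∀ x, 0 ≤ K x) →
      (∑ x : Fin n → Bool, ∑ y : Fin n → Bool, pairWeight ε x y * (K x * G y))
        ≤ ∑ x : Fin n → Bool, (1/2)^n * K x := by
    intro F G hG0 hG1 K hK
    refine Finset.sum_le_sum fun x _ => ?_
    calc ∑ y : Fin n → Bool, pairWeight ε x y * (K x * G y)
        ≤ ∑ y : Fin n → Bool, pairWeight ε x y * K x := by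
          refine Finset.sum_le_sum fun y _ => ?_
          have hw := pairWeight_nonneg hε0 hε1' x y
          have : K x * G y ≤ K x * 1 := mul_le_mul_of_nonneg_left (hG1 y) (hK x)
          rw [mul_one] at this
          exact mul_le_mul_of_nonneg_left this hw
      _ = (∑ y : Fin n → Bool, pairWeight ε x y) * K x := by rw [Finset.sum_mul]
      _ = (1/2)^n * K x := by rw [pairWeight_marginal]
  have ind_nonneg : ∀ (m : ℕ) (h : (Fin n → Bool) → (Fin m → Bool)) (z) (x),
      (0:ℝ) ≤ if h x = z then 1 else 0 := fun m h z x => by split <;> norm_num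
  have ind_le_one : ∀ (m : ℕ) (h : (Fin n → Bool) → (Fin m → Bool)) (z) (x),
      (if h x = z then (1:ℝ) else 0) ≤ 1 := fun m h z x => by split <;> norm_num
  have sum_ind : ∀ (z : Fin k → Bool) (h : (Fin n → Bool) → (Fin k → Bool)),
      ∑ x : Fin n → Bool, (1/2)^n * (if h x = z then (1:ℝ) else 0) = outDist h z := by
    intro z h
    rw [← Finset.mul_sum, outDist, one_div, inv_pow, inv_mul_eq_div]
  have hTle_f : ∀ z, T z ≤ outDist f z := by
    intro z
    have := Tbound (fun x => if f x = z then (1:ℝ) else 0) (fun y => if g y = z then (1:ℝ) else 0)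
      (ind_nonneg k g z) (ind_le_one k g z) (fun x => if f x = z then (1:ℝ) else 0)
      (ind_nonneg k f z)
    rw [sum_ind z f] at this
    exact this
  have hTle_g : ∀ z, T z ≤ outDist g z := by
    intro z
    have eq1 : T z = ∑ y : Fin n → Bool, ∑ x : Fin n → Bool,
        pairWeight ε y x * ((if g y = z then (1:ℝ) else 0) * (if f x = z then (1:ℝ) else 0)) := by
      rw [hT, Finset.sum_comm]
      exact Finset.sum_congr rfl fun y _ => Finset.sum_congr rfl fun x _ => by
        rw [pairWeight_comm]; ring
    rw [eq1]
    have := Tbound (fun x => if g x = z then (1:ℝ) else 0) (fun y => if f y = z then (1:ℝ) else 0)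
      (ind_nonneg k f z) (ind_le_one k f z) (fun y => if g y = z then (1:ℝ) else 0)
      (ind_nonneg k g z)
    rw [sum_ind z g] at this
    exact this
  have hTle_prod : ∀ z, T z ≤ outDist f z ^ c * outDist g z ^ c := by
    intro z
    have key := auxF ε hε0 hε1 n (fun x => if f x = z then (1:ℝ) else 0)
      (fun y => if g y = z then (1:ℝ) else 0) (ind_nonneg k f z) (ind_nonneg k g z)
    have erpow : ∀ (h : (Fin n → Bool) → (Fin k → Bool)) (x),
        (if h x = z then (1:ℝ) else 0) ^ (2-2*ε) = if h x = z then (1:ℝ) else 0 := by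
      intro h x
      split
      · exact Real.one_rpow _
      · exact Real.zero_rpow hPpos.ne'
    simp_rw [erpow] at key
    rw [hT]
    calc (∑ x : Fin n → Bool, ∑ y : Fin n → Bool, pairWeight ε x y *
          ((if f x = z then (1:ℝ) else 0) * (if g y = z then (1:ℝ) else 0)))
        ≤ ((∑ x : Fin n → Bool, if f x = z then (1:ℝ) else 0) / 2^n) ^ (1/(2-2*ε))
          * ((∑ y : Fin n → Bool, if g y = z then (1:ℝ) else 0) / 2^n) ^ (1/(2-2*ε)) := key
      _ = outDist f z ^ c * outDist g z ^ c := by rw [outDist, outDist, hc]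
  have hT_Phi : ∀ z, T z ≤ Phi c (outDist f z) (outDist g z) :=
    fun z => le_min (hTle_f z) (le_min (hTle_g z) (hTle_prod z))
  have hPhi2 : ∀ z, Phi c (outDist f z) (outDist g z)
      ≤ Phi c (Df z) (Dg z) + |outDist f z - Df z| + |outDist g z - Dg z| := by
    intro z
    calc Phi c (outDist f z) (outDist g z)
        ≤ Phi c (Df z) (outDist g z) + |outDist f z - Df z| :=
          Phi_abs hc0 hc1 (hout k f z) (hDf0 z) (hout k g z)
      _ = Phi c (outDist g z) (Df z) + |outDist f z - Df z| := by rw [Phi_comm]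
      _ ≤ (Phi c (Dg z) (Df z) + |outDist g z - Dg z|) + |outDist f z - Df z| := by
          have := Phi_abs hc0 hc1 (hout k g z) (hDg0 z) (hDf0 z)
          linarith
      _ = Phi c (Df z) (Dg z) + |outDist f z - Df z| + |outDist g z - Dg z| := by
          rw [Phi_comm]; ring
  -- the entropy bound
  set E : ℝ := (2:ℝ) ^ (-(t * ε) / (1 - ε)) with hE
  have hEpos : 0 < E := Real.rpow_pos_of_pos (by norm_num) _
  have hcpos : 0 < c := by positivity
  have expo_eq : -t * (2*c - 1) = -(t * ε) / (1 - ε) := by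
    have h1 : (1:ℝ) - ε ≠ 0 := by intro h; rw [sub_eq_zero] at h; rw [← h] at hε1; linarith
    have h2 : (2:ℝ) - 2*ε ≠ 0 := hPpos.ne'
    rw [hc]
    field_simp
    ring
  have entropy : ∀ (D : (Fin k → Bool) → ℝ), (∀ z, 0 ≤ D z) → (∑ z, D z = 1) →
      (∀ z, D z ≤ (2:ℝ) ^ (-t)) → ∑ z : Fin k → Bool, (D z ^ c)^2 ≤ E := by
    intro D hD0 hDsum hDle
    have step : ∀ z : Fin k → Bool, (D z ^ c)^2 = D z ^ (2*c - 1) * D z := by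
      intro z
      rw [sq, ← Real.rpow_add' (hD0 z) (by positivity : c + c ≠ 0)]
      rw [show c + c = (2*c - 1) + 1 from by ring,
        Real.rpow_add' (hD0 z) (by positivity : 2*c - 1 + 1 ≠ 0), Real.rpow_one]
    calc ∑ z : Fin k → Bool, (D z ^ c)^2
        = ∑ z : Fin k → Bool, D z ^ (2*c - 1) * D z := Finset.sum_congr rfl fun z _ => step z
      _ ≤ ∑ z : Fin k → Bool, ((2:ℝ) ^ (-t)) ^ (2*c - 1) * D z := by
          refine Finset.sum_le_sum fun z _ => ?_
          exact mul_le_mul_of_nonneg_right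
            (Real.rpow_le_rpow (hD0 z) (hDle z) h2c1) (hD0 z)
      _ = ((2:ℝ) ^ (-t)) ^ (2*c - 1) := by rw [← Finset.mul_sum, hDsum, mul_one]
      _ = (2:ℝ) ^ (-t * (2*c - 1)) := by
          rw [← Real.rpow_mul (by norm_num : (0:ℝ) ≤ 2)]
      _ = E := by rw [expo_eq]
  have hEf := entropy Df hDf0 hDfsum hDfle
  have hEg := entropy Dg hDg0 hDgsum hDgle
  have cs := Finset.sum_mul_sq_le_sq_mul_sq Finset.univ (fun z => Df z ^ c) (fun z => Dg z ^ c)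
  have hsum_nn : 0 ≤ ∑ z : Fin k → Bool, Df z ^ c * Dg z ^ c :=
    Finset.sum_nonneg fun z _ => mul_nonneg (Real.rpow_nonneg (hDf0 z) c)
      (Real.rpow_nonneg (hDg0 z) c)
  have hg_nn : 0 ≤ ∑ z : Fin k → Bool, (Dg z ^ c)^2 :=
    Finset.sum_nonneg fun z _ => sq_nonneg _
  have cs2 : (∑ z : Fin k → Bool, Df z ^ c * Dg z ^ c)^2 ≤ E^2 := by
    calc (∑ z : Fin k → Bool, Df z ^ c * Dg z ^ c)^2
        ≤ (∑ z : Fin k → Bool, (Df z ^ c)^2) * (∑ z : Fin k → Bool, (Dg z ^ c)^2) := cs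
      _ ≤ E^2 := by nlinarith [hEf, hEg, hg_nn, hEpos.le]
  have prod_le_E : ∑ z : Fin k → Bool, Df z ^ c * Dg z ^ c ≤ E := by
    nlinarith [cs2, hsum_nn, hEpos]
  -- assemble
  rw [prPair_eq]
  calc ∑ z : Fin k → Bool, T z
      ≤ ∑ z : Fin k → Bool, (Phi c (Df z) (Dg z) + |outDist f z - Df z| + |outDist g z - Dg z|) :=
        Finset.sum_le_sum fun z _ => (hT_Phi z).trans (hPhi2 z)
    _ = (∑ z : Fin k → Bool, Phi c (Df z) (Dg z)) + (∑ z : Fin k → Bool, |outDist f z - Df z|)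
        + (∑ z : Fin k → Bool, |outDist g z - Dg z|) := by
        rw [Finset.sum_add_distrib, Finset.sum_add_distrib]
    _ ≤ (∑ z : Fin k → Bool, Df z ^ c * Dg z ^ c) + δ + δ := by
        have := Finset.sum_le_sum (fun z (_ : z ∈ Finset.univ) => Phi_le_prod c (Df z) (Dg z))
        linarith [hDfδ, hDgδ, this]
    _ ≤ E + δ + δ := by linarith [prod_le_E]
    _ = E + 2*δ := by ring
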